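/- Let N ≥ 1, let v ∈ ℂ² ⊗ ℂ^N be any vector, and write X := v v† in 2×2 block form X = [[X₁₁, X₁₂],[X₁₂†, X₂₂]] with N×N blocks X_{ij}. Define B := X₁₂ + (Tr(X₁₂†)·𝟙_N - X₁₂†) and, for a real α, Φ_α(X) := [[Tr(X₁₁)·𝟙_N, α·B],[α·B†, Tr(X₂₂)·𝟙_N]] (a matrix on ℂ² ⊗ ℂ^N). Then for every real α with |α| ≤ 1, the matrix Φ_α(X) is separable. -/

import Mathlib

open Matrix Kronecker
open scoped ComplexOrder

noncomputable section

/-- A Hermitian matrix on ℂ^M ⊗ ℂ^N is separable if it is a finite sum of Kronecker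
products of positive semidefinite matrices. -/
def IsSeparableMat {M N : ℕ} (σ : Matrix (Fin M × Fin N) (Fin M × Fin N) ℂ) : Prop :=
  ∃ (k : ℕ) (A : Fin k → Matrix (Fin M) (Fin M) ℂ) (B : Fin k → Matrix (Fin N) (Fin N) ℂ),
    (∀ i, (A i).PosSemidef) ∧ (∀ i, (B i).PosSemidef) ∧ σ = ∑ i, A i ⊗ₖ B i

/-- Partial transpose on the first (Alice) factor. -/
def ptA {M N : ℕ} (ρ : Matrix (Fin M × Fin N) (Fin M × Fin N) ℂ) :
    Matrix (Fin M × Fin N) (Fin M × Fin N) ℂ :=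
  fun p q => ρ (q.1, p.2) (p.1, q.2)

/-- Partial transpose on the second (Bob) factor. -/
def ptB {M N : ℕ} (ρ : Matrix (Fin M × Fin N) (Fin M × Fin N) ℂ) :
    Matrix (Fin M × Fin N) (Fin M × Fin N) ℂ :=
  fun p q => ρ (p.1, q.2) (q.1, p.2)

/-- The second Pauli matrix σ₂. -/
def pauli2 : Matrix (Fin 2) (Fin 2) ℂ := !![0, -Complex.I; Complex.I, 0]

/-- ρ̃_A = (σ₂ ⊗ 𝟙_N) ρ^{T_A} (σ₂ ⊗ 𝟙_N). -/
def tildeA {N : ℕ} (ρ : Matrix (Fin 2 × Fin N) (Fin 2 × Fin N) ℂ) :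
    Matrix (Fin 2 × Fin N) (Fin 2 × Fin N) ℂ :=
  (pauli2 ⊗ₖ (1 : Matrix (Fin N) (Fin N) ℂ)) * ptA ρ *
    (pauli2 ⊗ₖ (1 : Matrix (Fin N) (Fin N) ℂ))

end

/-- The (a,b) block (N×N) of a matrix on ℂ² ⊗ ℂ^N. -/
noncomputable def blk {N : ℕ} (a b : Fin 2) (X : Matrix (Fin 2 × Fin N) (Fin 2 × Fin N) ℂ) :
    Matrix (Fin N) (Fin N) ℂ :=
  fun k l => X (a, k) (b, l)

/-- Assemble a matrix on ℂ² ⊗ ℂ^N from its four N×N blocks. -/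
noncomputable def fromBlocks2 {N : ℕ} (A B C D : Matrix (Fin N) (Fin N) ℂ) :
    Matrix (Fin 2 × Fin N) (Fin 2 × Fin N) ℂ :=
  fun p q =>
    if p.1 = 0 then (if q.1 = 0 then A p.2 q.2 else B p.2 q.2)
    else (if q.1 = 0 then C p.2 q.2 else D p.2 q.2)

namespace Stmt13Aux


set_option maxHeartbeats 1000000

lemma cast_sum_normSq {N : ℕ} (z : Fin N → ℂ) :
    ((∑ k, Complex.normSq (z k) : ℝ) : ℂ) = ∑ k, (starRingEnd ℂ) (z k) * z k := by
  rw [Complex.ofReal_sum]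
  exact Finset.sum_congr rfl fun k _ => Complex.normSq_eq_conj_mul_self

lemma cs_complex {N : ℕ} (f g : Fin N → ℂ) :
    Complex.normSq (∑ k, (starRingEnd ℂ) (f k) * g k) ≤
      (∑ k, Complex.normSq (f k)) * (∑ k, Complex.normSq (g k)) := by
  have h1 : ‖∑ k, (starRingEnd ℂ) (f k) * g k‖ ≤
      ∑ k, ‖f k‖ * ‖g k‖ := by
    refine (norm_sum_le _ _).trans (Finset.sum_le_sum fun k _ => ?_)
    rw [norm_mul, Complex.norm_conj]
  have h2 := Finset.sum_mul_sq_le_sq_mul_sq Finset.univ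
    (fun k => ‖f k‖) (fun k => ‖g k‖)
  have h3 : Complex.normSq (∑ k, (starRingEnd ℂ) (f k) * g k) ≤
      (∑ k, ‖f k‖ * ‖g k‖) ^ 2 := by
    rw [← Complex.sq_norm]
    exact pow_le_pow_left₀ (norm_nonneg _) h1 2
  refine h3.trans (h2.trans ?_)
  simp [Complex.sq_norm]

lemma expand_sum {N : ℕ} (x y w : Fin N → ℂ)
    (hw : (∑ k, (starRingEnd ℂ) (w k) * w k) = 1) :
    ∑ k, (starRingEnd ℂ) (x k - (starRingEnd ℂ) (∑ j, (starRingEnd ℂ) (x j) * w j) * w k) *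
        (y k - (starRingEnd ℂ) (∑ j, (starRingEnd ℂ) (y j) * w j) * w k)
      = (∑ k, (starRingEnd ℂ) (x k) * y k)
        - (starRingEnd ℂ) (∑ j, (starRingEnd ℂ) (y j) * w j) * (∑ j, (starRingEnd ℂ) (x j) * w j) := by
  set p := ∑ j, (starRingEnd ℂ) (x j) * w j with hp
  set q := ∑ j, (starRingEnd ℂ) (y j) * w j with hq
  have e : ∀ k, (starRingEnd ℂ) (x k - (starRingEnd ℂ) p * w k) * (y k - (starRingEnd ℂ) q * w k)
      = (starRingEnd ℂ) (x k) * y k - (starRingEnd ℂ) q * ((starRingEnd ℂ) (x k) * w k)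
        - p * ((starRingEnd ℂ) (w k) * y k)
        + (p * (starRingEnd ℂ) q) * ((starRingEnd ℂ) (w k) * w k) := by
    intro k
    simp only [map_sub, _root_.map_mul, Complex.conj_conj]
    ring
  simp only [e, Finset.sum_add_distrib, Finset.sum_sub_distrib, ← Finset.mul_sum]
  have hwy : ∑ k, (starRingEnd ℂ) (w k) * y k = (starRingEnd ℂ) q := by
    rw [hq, map_sum]
    exact Finset.sum_congr rfl fun k _ => by
      simp only [_root_.map_mul, Complex.conj_conj]; ring
  rw [hwy, ← hp, hw, mul_one]
  ring

lemma key_ineq {N : ℕ} (x y w : Fin N → ℂ)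
    (hw : ∑ k, Complex.normSq (w k) = 1) (lam : ℝ)
    (hlam : (lam : ℂ) * Complex.I =
      (∑ k, (starRingEnd ℂ) (y k) * w k) * (starRingEnd ℂ) (∑ k, (starRingEnd ℂ) (x k) * w k)
      - (starRingEnd ℂ) (∑ k, (starRingEnd ℂ) (y k) * w k) * (∑ k, (starRingEnd ℂ) (x k) * w k)) :
    Complex.normSq ((∑ k, (starRingEnd ℂ) (x k) * y k) + Complex.I * lam) ≤
      (∑ k, Complex.normSq (x k)) * (∑ k, Complex.normSq (y k)) := by
  set p := ∑ j, (starRingEnd ℂ) (x j) * w j with hp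
  set q := ∑ j, (starRingEnd ℂ) (y j) * w j with hq
  set c := ∑ k, (starRingEnd ℂ) (x k) * y k with hc
  set a := ∑ k, Complex.normSq (x k) with ha
  set b := ∑ k, Complex.normSq (y k) with hb
  have hwc : (∑ k, (starRingEnd ℂ) (w k) * w k) = 1 := by
    rw [← cast_sum_normSq, hw, Complex.ofReal_one]
  set x' : Fin N → ℂ := fun k => x k - (starRingEnd ℂ) p * w k with hx'
  set y' : Fin N → ℂ := fun k => y k - (starRingEnd ℂ) q * w k with hy'
  set d := ∑ k, (starRingEnd ℂ) (x' k) * y' k with hd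
  have hd_eq : d = c - (starRingEnd ℂ) q * p := by
    have h := expand_sum x y w hwc
    rw [← hp, ← hq, ← hc] at h
    simpa only [hd, hx', hy'] using h
  have ha' : (∑ k, Complex.normSq (x' k)) = a - Complex.normSq p := by
    have h := expand_sum x x w hwc
    rw [← hp] at h
    apply Complex.ofReal_injective
    rw [Complex.ofReal_sub, cast_sum_normSq, cast_sum_normSq, Complex.normSq_eq_conj_mul_self]
    simpa only [hx'] using h
  have hb' : (∑ k, Complex.normSq (y' k)) = b - Complex.normSq q := by
    have h := expand_sum y y w hwc
    rw [← hq] at h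
    apply Complex.ofReal_injective
    rw [Complex.ofReal_sub, cast_sum_normSq, cast_sum_normSq, Complex.normSq_eq_conj_mul_self]
    simpa only [hy'] using h
  have hP : Complex.normSq p ≤ a := by
    have h0 := Finset.sum_nonneg (fun k (_ : k ∈ Finset.univ) => Complex.normSq_nonneg (x' k))
    rw [ha'] at h0; linarith
  have hQ : Complex.normSq q ≤ b := by
    have h0 := Finset.sum_nonneg (fun k (_ : k ∈ Finset.univ) => Complex.normSq_nonneg (y' k))
    rw [hb'] at h0; linarith
  have hdcs : Complex.normSq d ≤ (a - Complex.normSq p) * (b - Complex.normSq q) := by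
    have h0 := cs_complex x' y'
    rwa [ha', hb'] at h0
  have hsplit : c + Complex.I * (lam : ℂ) = q * (starRingEnd ℂ) p + d := by
    rw [hd_eq]
    have h0 : Complex.I * (lam : ℂ) = (lam : ℂ) * Complex.I := by ring
    rw [h0, hlam]; ring
  have htri : ‖c + Complex.I * (lam : ℂ)‖ ≤
      ‖p‖ * ‖q‖ + ‖d‖ :=
    calc ‖c + Complex.I * (lam : ℂ)‖
        ≤ ‖q * (starRingEnd ℂ) p‖ + ‖d‖ := by
          rw [hsplit]; exact norm_add_le _ _
      _ = ‖p‖ * ‖q‖ + ‖d‖ := by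
          rw [norm_mul, Complex.norm_conj]; ring
  set P := ‖p‖ with hPdef
  set Q := ‖q‖ with hQdef
  set D := ‖d‖ with hDdef
  have hP2 : Complex.normSq p = P ^ 2 := (Complex.sq_norm p).symm
  have hQ2 : Complex.normSq q = Q ^ 2 := (Complex.sq_norm q).symm
  have hD2 : Complex.normSq d = D ^ 2 := (Complex.sq_norm d).symm
  rw [hP2] at hP hdcs
  rw [hQ2] at hQ hdcs
  rw [hD2] at hdcs
  have hPn : 0 ≤ P := norm_nonneg _
  have hQn : 0 ≤ Q := norm_nonneg _
  have hDn : 0 ≤ D := norm_nonneg _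
  have hS : 0 ≤ a - P ^ 2 := by linarith
  have hT : 0 ≤ b - Q ^ 2 := by linarith
  have h2 : 2 * (P * Q) * D ≤ P ^ 2 * (b - Q ^ 2) + (a - P ^ 2) * Q ^ 2 := by
    have hu : 0 ≤ 2 * (P * Q) * D := by positivity
    have hv : 0 ≤ P ^ 2 * (b - Q ^ 2) + (a - P ^ 2) * Q ^ 2 := by
      have := mul_nonneg (sq_nonneg P) hT
      have := mul_nonneg hS (sq_nonneg Q)
      linarith
    have hsq : (2 * (P * Q) * D) ^ 2 ≤ (P ^ 2 * (b - Q ^ 2) + (a - P ^ 2) * Q ^ 2) ^ 2 := by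
      nlinarith [mul_le_mul_of_nonneg_left hdcs
          (by positivity : (0:ℝ) ≤ 4 * P ^ 2 * Q ^ 2),
        sq_nonneg (P ^ 2 * (b - Q ^ 2) - (a - P ^ 2) * Q ^ 2)]
    nlinarith [hsq, hu, hv]
  have hfin : Complex.normSq (c + Complex.I * (lam : ℂ)) ≤ (P * Q + D) ^ 2 := by
    rw [← Complex.sq_norm]
    exact pow_le_pow_left₀ (norm_nonneg _) htri 2
  refine hfin.trans ?_
  nlinarith [h2, hdcs]



lemma psd_vmv {N : ℕ} (w : Fin N → ℂ) : (Matrix.vecMulVec w (star w)).PosSemidef := by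
  rw [Matrix.vecMulVec_eq Unit, ← Matrix.conjTranspose_replicateCol]
  exact Matrix.posSemidef_self_mul_conjTranspose _

lemma psd2 (ra rb : ℝ) (z : ℂ) (h1 : 0 ≤ ra) (h2 : 0 ≤ rb)
    (h3 : Complex.normSq z ≤ ra * rb) :
    (!![(ra : ℂ), z; (starRingEnd ℂ) z, (rb : ℂ)]).PosSemidef := by
  rw [Matrix.posSemidef_iff_dotProduct_mulVec]
  constructor
  · ext i j
    fin_cases i <;> fin_cases j <;>
      simp [Matrix.conjTranspose_apply, Complex.conj_ofReal]
  · intro u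
    set ζ := z * (starRingEnd ℂ) (u 0) * u 1 with hζ
    have hval : dotProduct (star u)
        ((!![(ra : ℂ), z; (starRingEnd ℂ) z, (rb : ℂ)]) *ᵥ u)
        = (ra : ℂ) * ((starRingEnd ℂ) (u 0) * u 0)
          + (rb : ℂ) * ((starRingEnd ℂ) (u 1) * u 1)
          + (ζ + (starRingEnd ℂ) ζ) := by
      simp only [dotProduct, Matrix.mulVec, Fin.sum_univ_two, Pi.star_apply,
        RCLike.star_def, Matrix.cons_val', Matrix.cons_val_zero, Matrix.cons_val_one,
        Matrix.head_cons, Matrix.empty_val', Matrix.cons_val_fin_one, hζ,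
        _root_.map_mul, Complex.conj_conj]
      simp
      ring
    have hexp : dotProduct (star u)
        ((!![(ra : ℂ), z; (starRingEnd ℂ) z, (rb : ℂ)]) *ᵥ u)
        = ((ra * Complex.normSq (u 0) + rb * Complex.normSq (u 1)
            + 2 * ζ.re : ℝ) : ℂ) := by
      rw [hval, ← Complex.normSq_eq_conj_mul_self, ← Complex.normSq_eq_conj_mul_self,
        Complex.add_conj]
      push_cast
      ring
    rw [hexp]
    rw [Complex.zero_le_real]
    set s := ‖u 0‖
    set t := ‖u 1‖
    set m := ‖z‖
    have hre : -(m * s * t) ≤ ζ.re := by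
      have habs : ‖ζ‖ = m * s * t := by
        rw [hζ, norm_mul, norm_mul, Complex.norm_conj]
      have h0 := (abs_le.1 (Complex.abs_re_le_norm ζ)).1
      rwa [habs] at h0
    have hns0 : Complex.normSq (u 0) = s ^ 2 := (Complex.sq_norm _).symm
    have hns1 : Complex.normSq (u 1) = t ^ 2 := (Complex.sq_norm _).symm
    have hm : Complex.normSq z = m ^ 2 := (Complex.sq_norm _).symm
    rw [hns0, hns1]
    rw [hm] at h3
    have hsn : 0 ≤ s := norm_nonneg _
    have htn : 0 ≤ t := norm_nonneg _
    have hmn : 0 ≤ m := norm_nonneg _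
    -- ra s^2 + rb t^2 + 2 Re ≥ ra s^2 + rb t^2 - 2 m s t ≥ 0
    have key : 2 * (m * s * t) ≤ ra * s ^ 2 + rb * t ^ 2 := by
      have hu : 0 ≤ 2 * (m * s * t) := by positivity
      have hv : 0 ≤ ra * s ^ 2 + rb * t ^ 2 := by positivity
      have hsq : (2 * (m * s * t)) ^ 2 ≤ (ra * s ^ 2 + rb * t ^ 2) ^ 2 := by
        nlinarith [mul_le_mul_of_nonneg_left h3
            (by positivity : (0:ℝ) ≤ 4 * s ^ 2 * t ^ 2),
          sq_nonneg (ra * s ^ 2 - rb * t ^ 2)]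
      nlinarith [hsq, hu, hv]
    linarith [hre]


end Stmt13Aux

open Stmt13Aux Complex

set_option maxHeartbeats 1600000 in
theorem stmt13 {N : ℕ} (hN : 1 ≤ N)
    (v : Fin 2 × Fin N → ℂ) (α : ℝ) (hα : |α| ≤ 1)
    (X : Matrix (Fin 2 × Fin N) (Fin 2 × Fin N) ℂ)
    (hX : X = Matrix.vecMulVec v (star v))
    (B : Matrix (Fin N) (Fin N) ℂ)
    (hB : B = blk 0 1 X +
      ((blk 0 1 X)ᴴ.trace • (1 : Matrix (Fin N) (Fin N) ℂ) - (blk 0 1 X)ᴴ)) :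
    IsSeparableMat
      (fromBlocks2
        ((blk 0 0 X).trace • (1 : Matrix (Fin N) (Fin N) ℂ)) ((α : ℂ) • B)
        ((α : ℂ) • Bᴴ) ((blk 1 1 X).trace • (1 : Matrix (Fin N) (Fin N) ℂ))) := by
  classical
  have hXe : ∀ p q, X p q = v p * (starRingEnd ℂ) (v q) := by
    intro p q
    rw [hX, Matrix.vecMulVec_apply]
    rfl
  set x : Fin N → ℂ := fun k => v (0, k) with hxdef
  set y : Fin N → ℂ := fun k => v (1, k) with hydef
  set c : ℂ := ∑ k, (starRingEnd ℂ) (x k) * y k with hcdef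
  set ra : ℝ := ∑ k, Complex.normSq (x k) with hradef
  set rb : ℝ := ∑ k, Complex.normSq (y k) with hrbdef
  set H : Matrix (Fin N) (Fin N) ℂ :=
    Matrix.of (fun k l =>
      -Complex.I * (x k * (starRingEnd ℂ) (y l) - y k * (starRingEnd ℂ) (x l))) with hHdef
  have hHapp : ∀ k l, H k l =
      -Complex.I * (x k * (starRingEnd ℂ) (y l) - y k * (starRingEnd ℂ) (x l)) :=
    fun k l => rfl
  have hH : H.IsHermitian := by
    ext k l
    rw [Matrix.conjTranspose_apply, hHapp, hHapp]
    simp only [Complex.star_def, map_neg, map_sub, _root_.map_mul, Complex.conj_conj,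
      Complex.conj_I]
    ring
  -- traces
  have hra0 : 0 ≤ ra := Finset.sum_nonneg fun k _ => Complex.normSq_nonneg _
  have hrb0 : 0 ≤ rb := Finset.sum_nonneg fun k _ => Complex.normSq_nonneg _
  have htr00 : (blk 0 0 X).trace = ((ra : ℝ) : ℂ) := by
    rw [Matrix.trace, hradef, Complex.ofReal_sum]
    refine Finset.sum_congr rfl fun k _ => ?_
    have e : (blk 0 0 X).diag k = x k * (starRingEnd ℂ) (x k) := hXe (0, k) (0, k)
    rw [e, mul_comm, ← Complex.normSq_eq_conj_mul_self]
  have htr11 : (blk 1 1 X).trace = ((rb : ℝ) : ℂ) := by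
    rw [Matrix.trace, hrbdef, Complex.ofReal_sum]
    refine Finset.sum_congr rfl fun k _ => ?_
    have e : (blk 1 1 X).diag k = y k * (starRingEnd ℂ) (y k) := hXe (1, k) (1, k)
    rw [e, mul_comm, ← Complex.normSq_eq_conj_mul_self]
  have htrc : (blk 0 1 X)ᴴ.trace = c := by
    rw [Matrix.trace, hcdef]
    refine Finset.sum_congr rfl fun k _ => ?_
    have e : blk 0 1 X k k = x k * (starRingEnd ℂ) (y k) := hXe (0, k) (1, k)
    rw [Matrix.diag_apply, Matrix.conjTranspose_apply, e, Complex.star_def,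
      _root_.map_mul, Complex.conj_conj]
  -- B entrywise
  have hBe : ∀ k l, B k l = c * ((1 : Matrix (Fin N) (Fin N) ℂ) k l) + Complex.I * H k l := by
    intro k l
    rw [hB]
    simp only [Matrix.add_apply, Matrix.sub_apply, Matrix.smul_apply, htrc, smul_eq_mul,
      Matrix.conjTranspose_apply, Complex.star_def]
    have e1 : blk 0 1 X k l = x k * (starRingEnd ℂ) (y l) := hXe (0, k) (1, l)
    have e2 : blk 0 1 X l k = x l * (starRingEnd ℂ) (y k) := hXe (0, l) (1, k)
    rw [e1, e2, hHapp, _root_.map_mul, Complex.conj_conj]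
    linear_combination (x k * (starRingEnd ℂ) (y l) - y k * (starRingEnd ℂ) (x l)) *
      Complex.I_mul_I
  -- spectral data
  set w : Fin N → Fin N → ℂ := fun j => (WithLp.equiv 2 _) (hH.eigenvectorBasis j) with hwdef
  set lam : Fin N → ℝ := hH.eigenvalues with hlamdef
  set U : Matrix (Fin N) (Fin N) ℂ := (hH.eigenvectorUnitary : Matrix (Fin N) (Fin N) ℂ)
    with hUdef
  have hUapp : ∀ k j, U k j = w j k := fun k j => hH.eigenvectorUnitary_apply k j
  have hUU : U * star U = 1 := Matrix.mem_unitaryGroup_iff.mp hH.eigenvectorUnitary.2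
  have hUU' : star U * U = 1 := Matrix.mem_unitaryGroup_iff'.mp hH.eigenvectorUnitary.2
  have hE1 : ∀ k l, (∑ j, w j k * (starRingEnd ℂ) (w j l))
      = ((1 : Matrix (Fin N) (Fin N) ℂ) k l) := by
    intro k l
    have h := congrFun (congrFun hUU k) l
    rw [Matrix.mul_apply] at h
    rw [← h]
    refine Finset.sum_congr rfl fun j _ => ?_
    rw [Matrix.star_apply, hUapp, hUapp, Complex.star_def]
  have hcol : ∀ j, (∑ k, (starRingEnd ℂ) (w j k) * w j k) = 1 := by
    intro j
    have h := congrFun (congrFun hUU' j) j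
    rw [Matrix.mul_apply] at h
    calc ∑ k, (starRingEnd ℂ) (w j k) * w j k
        = ∑ k, (star U) j k * U k j := by
          refine Finset.sum_congr rfl fun k _ => ?_
          rw [Matrix.star_apply, hUapp, Complex.star_def]
      _ = (1 : Matrix (Fin N) (Fin N) ℂ) j j := h
      _ = 1 := Matrix.one_apply_eq j
  have hwnorm : ∀ j, ∑ k, Complex.normSq (w j k) = 1 := by
    intro j
    apply Complex.ofReal_injective
    rw [cast_sum_normSq, hcol j, Complex.ofReal_one]
  have hE2 : ∀ k l, H k l = ∑ j, ((lam j : ℝ) : ℂ) * (w j k * (starRingEnd ℂ) (w j l)) := by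
    intro k l
    have hsp := hH.spectral_theorem
    rw [Unitary.conjStarAlgAut_apply] at hsp
    rw [← hUdef, ← hlamdef] at hsp
    have h := congrFun (congrFun hsp k) l
    rw [Matrix.mul_apply] at h
    rw [h]
    refine Finset.sum_congr rfl fun j _ => ?_
    rw [Matrix.mul_diagonal, Matrix.star_apply, hUapp, hUapp, Complex.star_def]
    have hofr : ((RCLike.ofReal ∘ lam) j : ℂ) = ((lam j : ℝ) : ℂ) := rfl
    rw [hofr]
    ring
  have hmulvec : ∀ j k, (H *ᵥ (w j)) k = ((lam j : ℝ) : ℂ) * w j k := by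
    intro j k
    have hmv := hH.mulVec_eigenvectorBasis j
    have h := congrFun hmv k
    rw [show w j = (hH.eigenvectorBasis j).ofLp from rfl, h]
    rw [Pi.smul_apply, Complex.real_smul]
  have hE3 : ∀ j, ((lam j : ℝ) : ℂ) * Complex.I =
      (∑ k, (starRingEnd ℂ) (y k) * w j k) *
        (starRingEnd ℂ) (∑ k, (starRingEnd ℂ) (x k) * w j k)
      - (starRingEnd ℂ) (∑ k, (starRingEnd ℂ) (y k) * w j k) *
        (∑ k, (starRingEnd ℂ) (x k) * w j k) := by
    intro j
    set p := ∑ k, (starRingEnd ℂ) (x k) * w j k with hpd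
    set q := ∑ k, (starRingEnd ℂ) (y k) * w j k with hqd
    have h1 : ((lam j : ℝ) : ℂ) = ∑ k, (starRingEnd ℂ) (w j k) * (H *ᵥ (w j)) k := by
      calc ((lam j : ℝ) : ℂ)
          = ((lam j : ℝ) : ℂ) * ∑ k, (starRingEnd ℂ) (w j k) * w j k := by
            rw [hcol j, mul_one]
        _ = ∑ k, (starRingEnd ℂ) (w j k) * (((lam j : ℝ) : ℂ) * w j k) := by
            rw [Finset.mul_sum]
            exact Finset.sum_congr rfl fun k _ => by ring
        _ = ∑ k, (starRingEnd ℂ) (w j k) * (H *ᵥ (w j)) k := by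
            exact Finset.sum_congr rfl fun k _ => by rw [hmulvec j k]
    have hmul : ∀ k, (H *ᵥ (w j)) k = ∑ l, H k l * w j l := fun k => rfl
    have hcp : ∑ k, (starRingEnd ℂ) (w j k) * x k = (starRingEnd ℂ) p := by
      rw [hpd, map_sum]
      exact Finset.sum_congr rfl fun k _ => by
        rw [_root_.map_mul, Complex.conj_conj]; ring
    have hcq : ∑ k, (starRingEnd ℂ) (w j k) * y k = (starRingEnd ℂ) q := by
      rw [hqd, map_sum]
      exact Finset.sum_congr rfl fun k _ => by
        rw [_root_.map_mul, Complex.conj_conj]; ring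
    have h2 : ∑ k, (starRingEnd ℂ) (w j k) * (H *ᵥ (w j)) k
        = -Complex.I * ((starRingEnd ℂ) p * q - (starRingEnd ℂ) q * p) := by
      calc ∑ k, (starRingEnd ℂ) (w j k) * (H *ᵥ (w j)) k
          = ∑ k, (-Complex.I) * (((starRingEnd ℂ) (w j k) * x k) * q
              - ((starRingEnd ℂ) (w j k) * y k) * p) := by
            refine Finset.sum_congr rfl fun k _ => ?_
            rw [hmul k, Finset.mul_sum]
            have e : ((starRingEnd ℂ) (w j k) * x k) * q
                - ((starRingEnd ℂ) (w j k) * y k) * p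
                = ∑ l, (((starRingEnd ℂ) (w j k) * x k) * ((starRingEnd ℂ) (y l) * w j l)
                    - ((starRingEnd ℂ) (w j k) * y k) * ((starRingEnd ℂ) (x l) * w j l)) := by
              rw [hpd, hqd, Finset.mul_sum, Finset.mul_sum, Finset.sum_sub_distrib]
            rw [e, Finset.mul_sum]
            refine Finset.sum_congr rfl fun l _ => ?_
            rw [hHapp]
            ring
        _ = (-Complex.I) * ((∑ k, (starRingEnd ℂ) (w j k) * x k) * q
              - (∑ k, (starRingEnd ℂ) (w j k) * y k) * p) := by
            rw [← Finset.mul_sum, Finset.sum_sub_distrib, Finset.sum_mul, Finset.sum_mul]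
        _ = -Complex.I * ((starRingEnd ℂ) p * q - (starRingEnd ℂ) q * p) := by
            rw [hcp, hcq]
    rw [h2] at h1
    rw [h1]
    linear_combination ((starRingEnd ℂ) q * p - (starRingEnd ℂ) p * q) * Complex.I_mul_I
  -- the separable decomposition
  have hα2 : α * α ≤ 1 := by nlinarith [abs_nonneg α, _root_.sq_abs α]
  refine ⟨N,
    fun j => !![((ra : ℝ) : ℂ), (α : ℂ) * (c + Complex.I * ((lam j : ℝ) : ℂ));
      (starRingEnd ℂ) ((α : ℂ) * (c + Complex.I * ((lam j : ℝ) : ℂ))), ((rb : ℝ) : ℂ)],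
    fun j => Matrix.vecMulVec (w j) (star (w j)), fun j => ?_, fun j => psd_vmv (w j), ?_⟩
  · refine psd2 ra rb _ hra0 hrb0 ?_
    have hk := key_ineq x y (w j) (hwnorm j) (lam j) (hE3 j)
    rw [← hcdef] at hk
    calc Complex.normSq ((α : ℂ) * (c + Complex.I * ((lam j : ℝ) : ℂ)))
        = (α * α) * Complex.normSq (c + Complex.I * ((lam j : ℝ) : ℂ)) := by
          rw [Complex.normSq_mul, Complex.normSq_ofReal]
      _ ≤ 1 * (ra * rb) := by
          refine mul_le_mul hα2 hk (Complex.normSq_nonneg _) zero_le_one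
      _ = ra * rb := one_mul _
  · ext ⟨s, k⟩ ⟨t, l⟩
    rw [Matrix.sum_apply]
    have hker : ∀ j, ((!![((ra : ℝ) : ℂ), (α : ℂ) * (c + Complex.I * ((lam j : ℝ) : ℂ));
        (starRingEnd ℂ) ((α : ℂ) * (c + Complex.I * ((lam j : ℝ) : ℂ))), ((rb : ℝ) : ℂ)])
          ⊗ₖ (Matrix.vecMulVec (w j) (star (w j)))) (s, k) (t, l)
        = (!![((ra : ℝ) : ℂ), (α : ℂ) * (c + Complex.I * ((lam j : ℝ) : ℂ));
            (starRingEnd ℂ) ((α : ℂ) * (c + Complex.I * ((lam j : ℝ) : ℂ))), ((rb : ℝ) : ℂ)]) s t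
          * (w j k * (starRingEnd ℂ) (w j l)) := by
      intro j
      rw [Matrix.kroneckerMap_apply, Matrix.vecMulVec_apply, Pi.star_apply, Complex.star_def]
    simp only [hker]
    have hHconj : ∀ k l, (starRingEnd ℂ) (H l k) = H k l := by
      intro k l
      have h := congrFun (congrFun hH k) l
      rw [← h, Matrix.conjTranspose_apply, Complex.star_def]
    have hone : ∀ k l : Fin N, (starRingEnd ℂ) ((1 : Matrix (Fin N) (Fin N) ℂ) l k)
        = (1 : Matrix (Fin N) (Fin N) ℂ) k l := by
      intro k l
      by_cases h : k = l
      · subst h; simp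
      · rw [Matrix.one_apply_ne (Ne.symm h), Matrix.one_apply_ne h, map_zero]
    fin_cases s <;> fin_cases t
    · -- block (0,0)
      show ((blk 0 0 X).trace • (1 : Matrix (Fin N) (Fin N) ℂ)) k l
          = ∑ j, ((ra : ℝ) : ℂ) * (w j k * (starRingEnd ℂ) (w j l))
      rw [Matrix.smul_apply, htr00, smul_eq_mul, ← Finset.mul_sum, hE1 k l]
    · -- block (0,1)
      show ((α : ℂ) • B) k l
          = ∑ j, ((α : ℂ) * (c + Complex.I * ((lam j : ℝ) : ℂ)))
              * (w j k * (starRingEnd ℂ) (w j l))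
      calc ((α : ℂ) • B) k l
          = (α : ℂ) * (c * ((1 : Matrix (Fin N) (Fin N) ℂ) k l) + Complex.I * H k l) := by
            rw [Matrix.smul_apply, smul_eq_mul, hBe k l]
        _ = (α : ℂ) * (c * (∑ j, w j k * (starRingEnd ℂ) (w j l))
              + Complex.I * (∑ j, ((lam j : ℝ) : ℂ) * (w j k * (starRingEnd ℂ) (w j l)))) := by
            rw [← hE1 k l, hE2 k l]
        _ = ∑ j, ((α : ℂ) * (c + Complex.I * ((lam j : ℝ) : ℂ)))
              * (w j k * (starRingEnd ℂ) (w j l)) := by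
            simp only [mul_add, Finset.mul_sum, ← Finset.sum_add_distrib]
            exact Finset.sum_congr rfl fun j _ => by ring
    · -- block (1,0)
      show ((α : ℂ) • Bᴴ) k l
          = ∑ j, ((starRingEnd ℂ) ((α : ℂ) * (c + Complex.I * ((lam j : ℝ) : ℂ))))
              * (w j k * (starRingEnd ℂ) (w j l))
      have hBH : Bᴴ k l = (starRingEnd ℂ) c * ((1 : Matrix (Fin N) (Fin N) ℂ) k l)
          - Complex.I * H k l := by
        rw [Matrix.conjTranspose_apply, Complex.star_def, hBe l k, map_add,
          _root_.map_mul, _root_.map_mul, Complex.conj_I, hone, hHconj]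
        ring
      calc ((α : ℂ) • Bᴴ) k l
          = (α : ℂ) * ((starRingEnd ℂ) c * ((1 : Matrix (Fin N) (Fin N) ℂ) k l)
              - Complex.I * H k l) := by
            rw [Matrix.smul_apply, smul_eq_mul, hBH]
        _ = (α : ℂ) * ((starRingEnd ℂ) c * (∑ j, w j k * (starRingEnd ℂ) (w j l))
              - Complex.I * (∑ j, ((lam j : ℝ) : ℂ) * (w j k * (starRingEnd ℂ) (w j l)))) := by
            rw [← hE1 k l, hE2 k l]
        _ = ∑ j, ((starRingEnd ℂ) ((α : ℂ) * (c + Complex.I * ((lam j : ℝ) : ℂ))))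
              * (w j k * (starRingEnd ℂ) (w j l)) := by
            simp only [mul_sub, Finset.mul_sum, ← Finset.sum_sub_distrib, map_add,
              _root_.map_mul, Complex.conj_I, Complex.conj_ofReal]
            exact Finset.sum_congr rfl fun j _ => by ring
    · -- block (1,1)
      show ((blk 1 1 X).trace • (1 : Matrix (Fin N) (Fin N) ℂ)) k l
          = ∑ j, ((rb : ℝ) : ℂ) * (w j k * (starRingEnd ℂ) (w j l))
      rw [Matrix.smul_apply, htr11, smul_eq_mul, ← Finset.mul_sum, hE1 k l]
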